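/- In the abstract Picard–Fuchs setting, suppose there is a distinguished index 0 ∈ Fin N such that ∂_0Ψ(t,h) = h^{−1}·Ψ(t,h) for all t ∈ U and h ∈ V, and assume that for every t ∈ U the N functions on V given by h ↦ ∂_cΨ(t,h) (c ∈ Fin N) are linearly independent over ℂ. Then A^c_{a0}(t) = δ^c_a for all t ∈ U and all a, c ∈ Fin N; that is, ∂_0 is the identity element for the product ∂_a ∘ ∂_b := Σ_c A^c_{ab}·∂_c. -/

import Mathlib

open Complex

/-- Partial derivative `∂_aΨ(t,h)` of `Ψ : ℂ^N × ℂ → ℂ^M` in the `a`-th coordinate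
direction of `ℂ^N`. -/
noncomputable def pdt {N M : ℕ} (Ψ : (Fin N → ℂ) → ℂ → (Fin M → ℂ)) (a : Fin N)
    (t : Fin N → ℂ) (h : ℂ) : Fin M → ℂ :=
  deriv (fun z : ℂ => Ψ (Function.update t a z) h) (t a)

/-- Partial derivative `∂_hΨ(t,h)` in the `ℂ`-direction. -/
noncomputable def pdh {N M : ℕ} (Ψ : (Fin N → ℂ) → ℂ → (Fin M → ℂ))
    (t : Fin N → ℂ) (h : ℂ) : Fin M → ℂ :=
  deriv (Ψ t) h

/-- Partial derivative `∂_aφ(t)` of a scalar function `φ : ℂ^N → ℂ` in the `a`-th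
coordinate direction. -/
noncomputable def pdS {N : ℕ} (a : Fin N) (φ : (Fin N → ℂ) → ℂ) (t : Fin N → ℂ) : ℂ :=
  deriv (fun z : ℂ => φ (Function.update t a z)) (t a)

/-- If `∂_0Ψ = h⁻¹·Ψ` for a distinguished index `0`, then `∂_0` is the identity for the
product determined by the Picard–Fuchs connection matrix: `A^c_{a0} = δ^c_a`. -/
theorem picardFuchs_flat_identity
    (N M : ℕ) (hN : 0 < N) (hM : 0 < M)
    (U : Set (Fin N → ℂ)) (hU : IsOpen U) (hUne : U.Nonempty)
    (V : Set ℂ) (hV : IsOpen V) (hVne : V.Nonempty) (hV0 : (0 : ℂ) ∉ V)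
    (Ψ : (Fin N → ℂ) → ℂ → (Fin M → ℂ))
    (hΨ : ContDiffOn ℂ ⊤ (fun p : (Fin N → ℂ) × ℂ => Ψ p.1 p.2) (U ×ˢ V))
    (A : Fin N → Fin N → Fin N → (Fin N → ℂ) → ℂ)
    (hA : ∀ c a b, DifferentiableOn ℂ (A c a b) U)
    (hPF : ∀ a b : Fin N, ∀ t ∈ U, ∀ h ∈ V,
      pdt (fun t' h' => pdt Ψ b t' h') a t h = h⁻¹ • ∑ c, A c a b t • pdt Ψ c t h)
    (i0 : Fin N)
    (hi0 : ∀ t ∈ U, ∀ h ∈ V, pdt Ψ i0 t h = h⁻¹ • Ψ t h)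
    (hLI : ∀ t ∈ U, ∀ c : Fin N → ℂ,
      (∀ h ∈ V, ∑ e, c e • pdt Ψ e t h = 0) → ∀ e, c e = 0) :
    ∀ t ∈ U, ∀ a c : Fin N, A c a i0 t = if a = c then 1 else 0 := by

  intro t ht a c
  have key : ∀ h ∈ V, ∑ e, ((A e a i0 t - if a = e then 1 else 0)) • pdt Ψ e t h = 0 := by
    intro h hVh
    have hne : (h : ℂ) ≠ 0 := fun h0 => hV0 (h0 ▸ hVh)
    have hup_diff : DifferentiableAt ℂ (fun z : ℂ => Ψ (Function.update t a z) h) (t a) := by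
      have h1 : DifferentiableAt ℂ (fun p : (Fin N → ℂ) × ℂ => Ψ p.1 p.2) (t, h) :=
        (hΨ.differentiableOn (by simp)).differentiableAt ((hU.prod hV).mem_nhds ⟨ht, hVh⟩)
      have h2 : DifferentiableAt ℂ (fun z : ℂ => (Function.update t a z, h)) (t a) := by
        apply DifferentiableAt.prodMk _ (differentiableAt_const _)
        rw [differentiableAt_pi]
        intro i
        by_cases hia : i = a <;> simp [Function.update_apply, hia]
      have h1' : DifferentiableAt ℂ (fun p : (Fin N → ℂ) × ℂ => Ψ p.1 p.2)
          (Function.update t a (t a), h) := by rwa [Function.update_eq_self]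
      have := h1'.comp (t a) h2
      simpa using this
    have hcont : Continuous fun z : ℂ => Function.update t a z := by
      refine continuous_pi fun i => ?_
      by_cases hia : i = a <;> simp [Function.update_apply, hia] <;> continuity
    have hevU : ∀ᶠ z in nhds (t a), Function.update t a z ∈ U := by
      have := (hU.preimage hcont).mem_nhds (show Function.update t a (t a) ∈ U by rwa [Function.update_eq_self])
      exact this
    have hev : (fun z : ℂ => pdt Ψ i0 (Function.update t a z) h)
        =ᶠ[nhds (t a)] fun z => h⁻¹ • Ψ (Function.update t a z) h := by
      filter_upwards [hevU] with z hz
      exact hi0 _ hz h hVh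
    have hstep : pdt (fun t' h' => pdt Ψ i0 t' h') a t h = h⁻¹ • pdt Ψ a t h := by
      show deriv (fun z : ℂ => pdt Ψ i0 (Function.update t a z) h) (t a) = _
      rw [hev.deriv_eq]
      exact (hup_diff.hasDerivAt.const_smul h⁻¹).deriv
    have hPF' := hPF a i0 t ht h hVh
    rw [hstep] at hPF'
    have hsum : pdt Ψ a t h = ∑ e, A e a i0 t • pdt Ψ e t h :=
      smul_right_injective (Fin M → ℂ) (inv_ne_zero hne) hPF'
    have hδ : ∑ e, (if a = e then (1:ℂ) else 0) • pdt Ψ e t h = pdt Ψ a t h := by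
      simp
    calc ∑ e, ((A e a i0 t - if a = e then 1 else 0)) • pdt Ψ e t h
        = (∑ e, A e a i0 t • pdt Ψ e t h)
          - ∑ e, (if a = e then (1:ℂ) else 0) • pdt Ψ e t h := by
          rw [← Finset.sum_sub_distrib]
          simp [sub_smul]
      _ = 0 := by rw [hδ, ← hsum, sub_self]
  have := hLI t ht _ key c
  exact sub_eq_zero.mp this
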